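/- Let T_l be any l×l matrix over GF(2) with partial distances d_1,…,d_l, let T₂ = [[1,0],[1,1]], and let T_L = T₂⊗T_l be the 2l×2l block matrix [[T_l,0],[T_l,T_l]] with partial distances D_1,…,D_{2l}. Then D_i = d_i for every 1 ≤ i ≤ l. -/

import Mathlib

open Matrix

/-- Kronecker product of square matrices over GF(2), with row/column index
pairs ordered lexicographically: `(a, b)` corresponds to index `a * n + b`. -/
noncomputable def kron {m n : ℕ} (A : Matrix (Fin m) (Fin m) (ZMod 2))
    (B : Matrix (Fin n) (Fin n) (ZMod 2)) :
    Matrix (Fin (m * n)) (Fin (m * n)) (ZMod 2) :=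
  Matrix.reindex finProdFinEquiv finProdFinEquiv (Matrix.kroneckerMap (· * ·) A B)

/-- Kernel code `C_i(T)`: the span of rows `i, …, l-1` (0-indexed) of `T`,
i.e. of rows `g_{i+1}, …, g_l` in 1-indexed notation.  For `i = l` this is `{0}`. -/
def kernelCode {l : ℕ} (T : Matrix (Fin l) (Fin l) (ZMod 2)) (i : ℕ) :
    Submodule (ZMod 2) (Fin l → ZMod 2) :=
  Submodule.span (ZMod 2) {v | ∃ j : Fin l, i ≤ (j : ℕ) ∧ v = T j}

/-- The partial distance of row `r` (0-indexed; row `g_{r+1}` in 1-indexed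
notation) of `T`: the minimum Hamming distance from that row to the kernel code
spanned by the rows below it, i.e. `d_{r+1}(T) = d_H(g_{r+1}, C_{r+1}(T))`. -/
noncomputable def partialDist {l : ℕ} (T : Matrix (Fin l) (Fin l) (ZMod 2)) (r : Fin l) : ℕ :=
  sInf {d : ℕ | ∃ c ∈ kernelCode T ((r : ℕ) + 1), hammingDist (T r) c = d}

/-- The matrix `T₂ = [[1,0],[1,1]]` over GF(2). -/
def Ttwo : Matrix (Fin 2) (Fin 2) (ZMod 2) := !![1, 0; 1, 1]

namespace PKaux

variable {l : ℕ}

/-- embed v ↦ (v, 0) -/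
def emb (v : Fin l → ZMod 2) : Fin (2 * l) → ZMod 2 :=
  fun k => if h : (k : ℕ) < l then v ⟨k, h⟩ else 0

/-- sum of the two halves -/
def half (v : Fin (2 * l) → ZMod 2) : Fin l → ZMod 2 :=
  fun k => v ⟨(k : ℕ), Nat.lt_of_lt_of_le k.isLt (by omega)⟩ + v ⟨l + (k : ℕ), by have := k.isLt; omega⟩

def embL : (Fin l → ZMod 2) →ₗ[ZMod 2] (Fin (2 * l) → ZMod 2) where
  toFun := emb
  map_add' u v := by funext k; simp only [emb, Pi.add_apply]; split <;> simp
  map_smul' a v := by funext k; simp only [emb, Pi.smul_apply, RingHom.id_apply]; split <;> simp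

def halfL : (Fin (2 * l) → ZMod 2) →ₗ[ZMod 2] (Fin l → ZMod 2) where
  toFun := half
  map_add' u v := by funext k; simp only [half, Pi.add_apply]; ring
  map_smul' a v := by
    funext k; simp only [half, Pi.smul_apply, RingHom.id_apply, smul_eq_mul]; ring

variable (T : Matrix (Fin l) (Fin l) (ZMod 2))

lemma row_lo (j : Fin l) (hj : (j : ℕ) < 2 * l) :
    kron Ttwo T ⟨(j : ℕ), hj⟩ = emb (T j) := by
  funext c
  simp only [kron, Matrix.reindex_apply, Matrix.submatrix_apply, Matrix.kroneckerMap_apply,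
    finProdFinEquiv_symm_apply, emb]
  have hd : (⟨(j : ℕ), hj⟩ : Fin (2 * l)).divNat = 0 := by
    ext; simp [Fin.divNat, Nat.div_eq_of_lt j.isLt]
  have hm : (⟨(j : ℕ), hj⟩ : Fin (2 * l)).modNat = j := by
    ext; simp [Fin.modNat, Nat.mod_eq_of_lt j.isLt]
  rw [hd, hm]
  rcases Nat.lt_or_ge (c : ℕ) l with h | h
  · have hd2 : c.divNat = 0 := by ext; simp [Fin.divNat, Nat.div_eq_of_lt h]
    have hm2 : c.modNat = ⟨(c : ℕ), h⟩ := by ext; simp [Fin.modNat, Nat.mod_eq_of_lt h]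
    rw [hd2, hm2, dif_pos h]
    simp [Ttwo]
  · have hd2 : c.divNat = 1 := by
      ext
      simp only [Fin.divNat]
      have h2 := c.isLt
      show (c : ℕ) / l = ((1 : Fin 2) : ℕ)
      exact Nat.div_eq_of_lt_le (by omega) (by omega)
    rw [hd2, dif_neg (by omega)]
    simp [Ttwo]

lemma row_hi (j : Fin l) (hj : l + (j : ℕ) < 2 * l) (c : Fin (2 * l)) :
    kron Ttwo T ⟨l + (j : ℕ), hj⟩ c = T j c.modNat := by
  simp only [kron, Matrix.reindex_apply, Matrix.submatrix_apply, Matrix.kroneckerMap_apply,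
    finProdFinEquiv_symm_apply]
  have hd : (⟨l + (j : ℕ), hj⟩ : Fin (2 * l)).divNat = 1 := by
    ext
    simp only [Fin.divNat]
    have := j.isLt
    show (l + (j : ℕ)) / l = ((1 : Fin 2) : ℕ)
    exact Nat.div_eq_of_lt_le (by omega) (by omega)
  have hm : (⟨l + (j : ℕ), hj⟩ : Fin (2 * l)).modNat = j := by
    ext
    simp only [Fin.modNat]
    show (l + (j : ℕ)) % l = j
    rw [Nat.add_mod_left, Nat.mod_eq_of_lt j.isLt]
  rw [hd, hm]
  have h1 : ∀ a : Fin 2, Ttwo 1 a = 1 := by decide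
  rw [h1, one_mul]

lemma half_emb (v : Fin l → ZMod 2) : half (emb v) = v := by
  funext k
  have hk := k.isLt
  simp only [half, emb]
  rw [dif_pos hk, dif_neg (by omega)]
  simp

lemma half_row_hi (j : Fin l) (hj : l + (j : ℕ) < 2 * l) :
    half (kron Ttwo T ⟨l + (j : ℕ), hj⟩) = 0 := by
  funext k
  have hk := k.isLt
  simp only [half, row_hi]
  have hm1 : (⟨(k : ℕ), by omega⟩ : Fin (2 * l)).modNat = k := by
    ext; simp [Fin.modNat, Nat.mod_eq_of_lt hk]
  have hm2 : (⟨l + (k : ℕ), by omega⟩ : Fin (2 * l)).modNat = k := by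
    ext
    simp only [Fin.modNat]
    show (l + (k : ℕ)) % l = k
    rw [Nat.add_mod_left, Nat.mod_eq_of_lt hk]
  rw [hm1, hm2]
  simp [CharTwo.add_self_eq_zero]

lemma emb_mem {i : ℕ} {c : Fin l → ZMod 2} (hc : c ∈ kernelCode T i) :
    emb c ∈ kernelCode (kron Ttwo T) i := by
  have hle : kernelCode T i ≤ (kernelCode (kron Ttwo T) i).comap embL := by
    rw [kernelCode, Submodule.span_le]
    rintro v ⟨j, hji, rfl⟩
    have hj2 : (j : ℕ) < 2 * l := by have := j.isLt; omega
    simp only [SetLike.mem_coe, Submodule.mem_comap]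
    show emb (T j) ∈ kernelCode (kron Ttwo T) i
    rw [← row_lo T j hj2]
    exact Submodule.subset_span ⟨⟨(j : ℕ), hj2⟩, by simpa using hji, rfl⟩
  exact hle hc

lemma half_mem {i : ℕ} {c : Fin (2 * l) → ZMod 2}
    (hc : c ∈ kernelCode (kron Ttwo T) i) : half c ∈ kernelCode T i := by
  have hle : kernelCode (kron Ttwo T) i ≤ (kernelCode T i).comap halfL := by
    rw [kernelCode, Submodule.span_le]
    rintro v ⟨j, hji, rfl⟩
    simp only [SetLike.mem_coe, Submodule.mem_comap]
    show half (kron Ttwo T j) ∈ kernelCode T i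
    rcases Nat.lt_or_ge (j : ℕ) l with h | h
    · have hje : j = ⟨((⟨(j : ℕ), h⟩ : Fin l) : ℕ), by simpa using j.isLt⟩ := by ext; rfl
      rw [hje, row_lo, half_emb]
      exact Submodule.subset_span ⟨⟨(j : ℕ), h⟩, by simpa using hji, rfl⟩
    · have hjl := j.isLt
      have hje : j = ⟨l + ((⟨(j : ℕ) - l, by omega⟩ : Fin l) : ℕ), by simp; omega⟩ := by
        ext; simp; omega
      rw [hje, half_row_hi]
      exact Submodule.zero_mem _
  exact hle hc

lemma ham_emb_le (hl : 0 < l) (v w : Fin l → ZMod 2) :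
    hammingDist (emb v) (emb w) ≤ hammingDist v w := by
  show (Finset.univ.filter fun k => emb v k ≠ emb w k).card ≤
    (Finset.univ.filter fun k => v k ≠ w k).card
  apply Finset.card_le_card_of_injOn (fun k => ⟨(k : ℕ) % l, Nat.mod_lt _ hl⟩)
  · intro k hk
    simp only [Finset.mem_coe, Finset.mem_filter, Finset.mem_univ, true_and] at hk ⊢
    by_cases h : (k : ℕ) < l
    · simp only [emb, dif_pos h] at hk
      simpa [Nat.mod_eq_of_lt h] using hk
    · simp [emb, dif_neg h] at hk
  · intro k1 hk1 k2 hk2 he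
    simp only [Finset.mem_coe, Finset.mem_filter, Finset.mem_univ, true_and] at hk1 hk2
    have h1 : (k1 : ℕ) < l := by
      by_contra h; simp [emb, dif_neg h] at hk1
    have h2 : (k2 : ℕ) < l := by
      by_contra h; simp [emb, dif_neg h] at hk2
    have := congrArg Fin.val he
    simp only at this
    rw [Nat.mod_eq_of_lt h1, Nat.mod_eq_of_lt h2] at this
    exact Fin.ext this

lemma ham_half_le (v : Fin l → ZMod 2) (c : Fin (2 * l) → ZMod 2) :
    hammingDist v (half c) ≤ hammingDist (emb v) c := by
  show (Finset.univ.filter fun k => v k ≠ half c k).card ≤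
    (Finset.univ.filter fun k => emb v k ≠ c k).card
  classical
  set f : Fin l → Fin (2 * l) := fun k =>
    if v k ≠ c ⟨(k : ℕ), by have := k.isLt; omega⟩
      then ⟨(k : ℕ), by have := k.isLt; omega⟩
      else ⟨l + (k : ℕ), by have := k.isLt; omega⟩ with hf
  have hmod : ∀ k : Fin l, ((f k : Fin (2 * l)) : ℕ) % l = (k : ℕ) := by
    intro k
    have hk := k.isLt
    rw [hf]
    dsimp only
    split_ifs
    · exact Nat.mod_eq_of_lt hk
    · show (l + (k : ℕ)) % l = (k : ℕ)
      rw [Nat.add_mod_left, Nat.mod_eq_of_lt hk]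
  apply Finset.card_le_card_of_injOn f
  · intro k hk
    simp only [Finset.mem_coe, Finset.mem_filter, Finset.mem_univ, true_and] at hk ⊢
    have hkl := k.isLt
    rw [hf]
    dsimp only
    by_cases h : v k ≠ c ⟨(k : ℕ), by omega⟩
    · rw [if_pos h]
      simpa [emb, dif_pos hkl] using h
    · rw [if_neg h]
      push_neg at h
      simp only [half, h] at hk
      have hne : c ⟨l + (k : ℕ), by omega⟩ ≠ 0 := by
        intro h0
        rw [h0, add_zero] at hk
        exact hk rfl
      simp only [emb, dif_neg (by omega : ¬ l + (k : ℕ) < l)]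
      exact fun he => hne he.symm
  · intro k1 hk1 k2 hk2 he
    apply Fin.ext
    rw [← hmod k1, ← hmod k2, he]

end PKaux

open PKaux

theorem partialDist_kron_upperHalf {l : ℕ} (T : Matrix (Fin l) (Fin l) (ZMod 2)) (i : Fin l) :
    partialDist (kron Ttwo T) ⟨(i : ℕ), by have := i.isLt; omega⟩ = partialDist T i := by
  have hl : 0 < l := i.pos
  have hi2 : (i : ℕ) < 2 * l := by have := i.isLt; omega
  set SL : Set ℕ := {d : ℕ | ∃ c ∈ kernelCode (kron Ttwo T) ((i : ℕ) + 1),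
    hammingDist (kron Ttwo T ⟨(i : ℕ), hi2⟩) c = d} with hSL
  set ST : Set ℕ := {d : ℕ | ∃ c ∈ kernelCode T ((i : ℕ) + 1), hammingDist (T i) c = d} with hST
  have hrow : kron Ttwo T ⟨(i : ℕ), hi2⟩ = emb (T i) := row_lo T i hi2
  have hSLne : SL.Nonempty :=
    ⟨_, 0, Submodule.zero_mem _, rfl⟩
  have hSTne : ST.Nonempty :=
    ⟨_, 0, Submodule.zero_mem _, rfl⟩
  have hL : partialDist (kron Ttwo T) ⟨(i : ℕ), hi2⟩ = sInf SL := rfl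
  have hT : partialDist T i = sInf ST := rfl
  rw [hL, hT]
  apply le_antisymm
  · -- sInf SL ≤ sInf ST
    obtain ⟨c, hc, hd⟩ := Nat.sInf_mem hSTne
    have h1 : hammingDist (kron Ttwo T ⟨(i : ℕ), hi2⟩) (emb c) ∈ SL :=
      ⟨emb c, emb_mem T hc, rfl⟩
    calc sInf SL ≤ hammingDist (kron Ttwo T ⟨(i : ℕ), hi2⟩) (emb c) := Nat.sInf_le h1
      _ ≤ hammingDist (T i) c := by rw [hrow]; exact ham_emb_le hl _ _
      _ = sInf ST := hd
  · obtain ⟨c, hc, hd⟩ := Nat.sInf_mem hSLne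
    have h1 : hammingDist (T i) (half c) ∈ ST :=
      ⟨half c, half_mem T hc, rfl⟩
    calc sInf ST ≤ hammingDist (T i) (half c) := Nat.sInf_le h1
      _ ≤ hammingDist (kron Ttwo T ⟨(i : ℕ), hi2⟩) c := by rw [hrow]; exact ham_half_le _ _
      _ = sInf SL := hd
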